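/- For any finite simple graph G = (V, E) with m edges and n vertices in which every vertex has degree at most Δ, there exists a downward sequence V = S₀ ⊋ S₁ ⊋ ⋯ ⊋ S_n = ∅ such that for every i ∈ {0, 1, …, n}, |E[S_i, V \ S_i]| ≤ m/2 + √(m·Δ) + Δ. -/

import Mathlib

open Finset
open scoped Classical

/-- The number of edges of `G` with one endpoint in `S` and the other outside `S`. -/
noncomputable def cutCard {V : Type*} [Fintype V] (G : SimpleGraph V) (S : Finset V) : ℕ :=
  (G.edgeFinset.filter fun e => (∃ u ∈ e, u ∈ S) ∧ ∃ v ∈ e, v ∉ S).card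

namespace CutProofAux

variable {V : Type*} [Fintype V] (G : SimpleGraph V)

/-- number of neighbours of `v` inside `S` -/
noncomputable def aa (S : Finset V) (v : V) : ℕ := (G.neighborFinset v ∩ S).card

/-- number of neighbours of `v` outside `S` -/
noncomputable def bb (S : Finset V) (v : V) : ℕ := (G.neighborFinset v \ S).card

/-- twice the number of edges inside `S` -/
noncomputable def XX (S : Finset V) : ℕ := ∑ v ∈ S, aa G S v

/-- the number of cut edges -/
noncomputable def CC (S : Finset V) : ℕ := ∑ v ∈ S, bb G S v

/-- twice the number of edges outside `S` -/
noncomputable def YY (S : Finset V) : ℕ := ∑ v ∈ Sᶜ, bb G S v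

lemma aa_add_bb (S : Finset V) (v : V) : aa G S v + bb G S v = G.degree v := by
  rw [aa, bb, ← SimpleGraph.card_neighborFinset_eq_degree]
  exact Finset.card_inter_add_card_sdiff _ _

lemma aa_erase (S : Finset V) {v : V} (hv : v ∈ S) {u : V} (hu : u ≠ v) :
    aa G S u = aa G (S.erase v) u + (if G.Adj u v then 1 else 0) := by
  unfold aa
  by_cases h : G.Adj u v
  · have hvN : v ∈ G.neighborFinset u := by
      rw [SimpleGraph.mem_neighborFinset]; exact h
    have hrepr : G.neighborFinset u ∩ S = insert v (G.neighborFinset u ∩ S.erase v) := by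
      ext w
      simp only [mem_inter, mem_insert, mem_erase]
      constructor
      · rintro ⟨hw1, hw2⟩
        by_cases hwv : w = v
        · exact Or.inl hwv
        · exact Or.inr ⟨hw1, hwv, hw2⟩
      · rintro (rfl | ⟨hw1, _, hw2⟩)
        · exact ⟨hvN, hv⟩
        · exact ⟨hw1, hw2⟩
    rw [if_pos h, hrepr, card_insert_of_notMem]
    intro hcon
    exact (mem_erase.mp (mem_inter.mp hcon).2).1 rfl
  · rw [if_neg h, add_zero]
    congr 1
    ext w
    simp only [mem_inter, mem_erase, ne_eq]
    constructor
    · rintro ⟨hw1, hw2⟩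
      refine ⟨hw1, ?_, hw2⟩
      rintro rfl
      exact h (by rwa [SimpleGraph.mem_neighborFinset] at hw1)
    · rintro ⟨hw1, -, hw2⟩
      exact ⟨hw1, hw2⟩

lemma aa_erase_self (S : Finset V) (v : V) : aa G (S.erase v) v = aa G S v := by
  unfold aa
  congr 1
  ext w
  simp only [mem_inter, mem_erase, ne_eq]
  constructor
  · rintro ⟨hw1, -, hw2⟩
    exact ⟨hw1, hw2⟩
  · rintro ⟨hw1, hw2⟩
    refine ⟨hw1, ?_, hw2⟩
    rintro rfl
    exact SimpleGraph.notMem_neighborFinset_self G w hw1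

lemma bb_erase (S : Finset V) {v : V} (hv : v ∈ S) {u : V} (hu : u ≠ v) :
    bb G (S.erase v) u = bb G S u + (if G.Adj u v then 1 else 0) := by
  unfold bb
  by_cases h : G.Adj u v
  · have hvN : v ∈ G.neighborFinset u := by
      rw [SimpleGraph.mem_neighborFinset]; exact h
    have hrepr : G.neighborFinset u \ S.erase v = insert v (G.neighborFinset u \ S) := by
      ext w
      simp only [mem_sdiff, mem_erase, mem_insert, ne_eq, not_and]
      constructor
      · rintro ⟨hw1, hw2⟩
        by_cases hwv : w = v
        · exact Or.inl hwv
        · exact Or.inr ⟨hw1, fun hwS => (hw2 hwv hwS).elim⟩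
      · rintro (rfl | ⟨hw1, hw2⟩)
        · exact ⟨hvN, fun hvv _ => (hvv rfl).elim⟩
        · exact ⟨hw1, fun _ hwS => hw2 hwS⟩
    rw [if_pos h, hrepr, card_insert_of_notMem]
    intro hcon
    exact (mem_sdiff.mp hcon).2 hv
  · rw [if_neg h, add_zero]
    congr 1
    ext w
    simp only [mem_sdiff, mem_erase, ne_eq, not_and]
    constructor
    · rintro ⟨hw1, hw2⟩
      refine ⟨hw1, ?_⟩
      by_cases hwv : w = v
      · subst hwv
        exact absurd (by rwa [SimpleGraph.mem_neighborFinset] at hw1) h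
      · exact hw2 hwv
    · rintro ⟨hw1, hw2⟩
      exact ⟨hw1, fun _ => hw2⟩

lemma bb_erase_self (S : Finset V) (v : V) : bb G (S.erase v) v = bb G S v := by
  unfold bb
  congr 1
  ext w
  simp only [mem_sdiff, mem_erase, ne_eq, not_and]
  constructor
  · rintro ⟨hw1, hw2⟩
    refine ⟨hw1, ?_⟩
    have hwv : w ≠ v := by
      rintro rfl
      exact SimpleGraph.notMem_neighborFinset_self G w hw1
    exact hw2 hwv
  · rintro ⟨hw1, hw2⟩
    exact ⟨hw1, fun _ => hw2⟩

lemma sum_ite_adj (T : Finset V) (v : V) :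
    (∑ u ∈ T, if G.Adj u v then 1 else 0) = (G.neighborFinset v ∩ T).card := by
  have h1 : G.neighborFinset v ∩ T = T.filter (fun u => G.Adj u v) := by
    ext u
    simp only [mem_inter, mem_filter, SimpleGraph.mem_neighborFinset]
    rw [G.adj_comm]
    tauto
  rw [h1, Finset.card_filter]

lemma XX_erase (S : Finset V) {v : V} (hv : v ∈ S) :
    XX G S = XX G (S.erase v) + 2 * aa G S v := by
  have h0 : XX G S = aa G S v + ∑ u ∈ S.erase v, aa G S u := by
    rw [XX, ← Finset.add_sum_erase S _ hv]
  have h1 : ∑ u ∈ S.erase v, aa G S u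
      = ∑ u ∈ S.erase v, (aa G (S.erase v) u + if G.Adj u v then 1 else 0) := by
    refine Finset.sum_congr rfl fun u hu => ?_
    exact aa_erase G S hv (Finset.ne_of_mem_erase hu)
  have h2 : (∑ u ∈ S.erase v, if G.Adj u v then 1 else 0) = aa G S v := by
    rw [sum_ite_adj]
    rw [show (G.neighborFinset v ∩ S.erase v).card = aa G (S.erase v) v from rfl]
    exact aa_erase_self G S v
  rw [h0, h1, Finset.sum_add_distrib, h2, XX]
  ring

lemma CC_erase (S : Finset V) {v : V} (hv : v ∈ S) :
    CC G (S.erase v) + bb G S v = CC G S + aa G S v := by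
  have h0 : CC G S = bb G S v + ∑ u ∈ S.erase v, bb G S u := by
    rw [CC, ← Finset.add_sum_erase S _ hv]
  have h1 : CC G (S.erase v)
      = ∑ u ∈ S.erase v, (bb G S u + if G.Adj u v then 1 else 0) := by
    rw [CC]
    refine Finset.sum_congr rfl fun u hu => ?_
    exact bb_erase G S hv (Finset.ne_of_mem_erase hu)
  have h2 : (∑ u ∈ S.erase v, if G.Adj u v then 1 else 0) = aa G S v := by
    rw [sum_ite_adj]
    rw [show (G.neighborFinset v ∩ S.erase v).card = aa G (S.erase v) v from rfl]
    exact aa_erase_self G S v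
  rw [h1, Finset.sum_add_distrib, h2, h0]
  ring

lemma compl_erase (S : Finset V) {v : V} (hv : v ∈ S) :
    (S.erase v)ᶜ = insert v Sᶜ := by
  ext w
  simp only [mem_compl, mem_erase, mem_insert, ne_eq, not_and]
  by_cases hwv : w = v
  · subst hwv; tauto
  · tauto

lemma YY_erase (S : Finset V) {v : V} (hv : v ∈ S) :
    YY G (S.erase v) = YY G S + 2 * bb G S v := by
  have hvc : v ∉ Sᶜ := by simp [hv]
  have h0 : YY G (S.erase v) = bb G (S.erase v) v + ∑ u ∈ Sᶜ, bb G (S.erase v) u := by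
    rw [YY, compl_erase S hv, Finset.sum_insert hvc]
  have h1 : ∑ u ∈ Sᶜ, bb G (S.erase v) u
      = ∑ u ∈ Sᶜ, (bb G S u + if G.Adj u v then 1 else 0) := by
    refine Finset.sum_congr rfl fun u hu => ?_
    have huv : u ≠ v := by
      rintro rfl
      exact (mem_compl.mp hu) hv
    exact bb_erase G S hv huv
  have h2 : (∑ u ∈ Sᶜ, if G.Adj u v then 1 else 0) = bb G S v := by
    rw [sum_ite_adj]
    rw [bb]
    congr 1
    ext w
    simp only [mem_inter, mem_compl, mem_sdiff]
  rw [h0, h1, Finset.sum_add_distrib, h2, bb_erase_self, YY]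
  ring

lemma XX_univ : XX G univ = 2 * G.edgeFinset.card := by
  rw [XX, ← SimpleGraph.sum_degrees_eq_twice_card_edges]
  refine Finset.sum_congr rfl fun v _ => ?_
  rw [aa, Finset.inter_univ]
  exact SimpleGraph.card_neighborFinset_eq_degree G v

lemma CC_univ : CC G univ = 0 := by
  rw [CC]
  refine Finset.sum_eq_zero fun v _ => ?_
  rw [bb]
  simp

lemma YY_univ : YY G univ = 0 := by
  rw [YY]
  simp

lemma CC_eq_cutCard (S : Finset V) : CC G S = cutCard G S := by
  classical
  -- Step 1 : CC S = card of the set of ordered pairs (u,w), u ∈ S, w ∉ S, adjacent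
  set PF : Finset (V × V) := (S ×ˢ Sᶜ).filter (fun p => G.Adj p.1 p.2) with hPFdef
  have hform : PF = S.biUnion (fun u => (G.neighborFinset u \ S).image (fun w => (u, w))) := by
    ext p
    obtain ⟨u, w⟩ := p
    simp only [hPFdef, mem_filter, mem_product, mem_biUnion, mem_image, mem_sdiff, mem_compl,
      SimpleGraph.mem_neighborFinset, Prod.mk.injEq]
    constructor
    · rintro ⟨⟨h1, h2⟩, h3⟩
      exact ⟨u, h1, w, ⟨h3, h2⟩, rfl, rfl⟩
    · rintro ⟨u', hu', w', ⟨hadj, hw'⟩, rfl, rfl⟩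
      exact ⟨⟨hu', hw'⟩, hadj⟩
  have hdisj : ∀ x ∈ S, ∀ y ∈ S, x ≠ y →
      Disjoint ((G.neighborFinset x \ S).image (fun w => (x, w)))
        ((G.neighborFinset y \ S).image (fun w => (y, w))) := by
    intro x _ y _ hxy
    rw [Finset.disjoint_left]
    rintro p hp1 hp2
    simp only [mem_image] at hp1 hp2
    obtain ⟨w1, _, rfl⟩ := hp1
    obtain ⟨w2, _, h2⟩ := hp2
    exact hxy (congrArg Prod.fst h2).symm
  have hcard1 : CC G S = PF.card := by
    rw [hform, Finset.card_biUnion hdisj, CC]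
    refine Finset.sum_congr rfl fun v _ => ?_
    rw [Finset.card_image_of_injective _ (fun w1 w2 h => (Prod.mk.injEq _ _ _ _).mp h |>.2)]
    rfl
  -- Step 2 : PF.card = cutCard
  rw [hcard1, cutCard]
  refine Finset.card_bij (fun p _ => Sym2.mk p.1 p.2) ?_ ?_ ?_
  · rintro ⟨u, w⟩ hp
    simp only [hPFdef, mem_filter, mem_product, mem_compl] at hp
    obtain ⟨⟨huS, hwS⟩, hadj⟩ := hp
    simp only [mem_filter, SimpleGraph.mem_edgeFinset]
    refine ⟨?_, ⟨u, Sym2.mem_mk_left u w, huS⟩, ⟨w, Sym2.mem_mk_right u w, hwS⟩⟩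
    rw [SimpleGraph.mem_edgeSet]
    exact hadj
  · rintro ⟨u1, w1⟩ hp1 ⟨u2, w2⟩ hp2 heq
    simp only [hPFdef, mem_filter, mem_product, mem_compl] at hp1 hp2
    have := Sym2.eq_iff.mp heq
    rcases this with ⟨rfl, rfl⟩ | ⟨rfl, rfl⟩
    · rfl
    · exact absurd hp2.1.1 hp1.1.2
  · intro e he
    simp only [mem_filter, SimpleGraph.mem_edgeFinset] at he
    obtain ⟨heE, ⟨a, haMem, haS⟩, ⟨b, hbMem, hbS⟩⟩ := he
    obtain ⟨y, rfl⟩ := Sym2.mem_iff_exists.mp haMem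
    have hadj : G.Adj a y := by rwa [SimpleGraph.mem_edgeSet] at heE
    have hby : b = y := by
      rcases Sym2.mem_iff.mp hbMem with rfl | h
      · exact absurd haS hbS
      · exact h
    subst hby
    refine ⟨(a, b), ?_, rfl⟩
    simp only [hPFdef, mem_filter, mem_product, mem_compl]
    exact ⟨⟨haS, hbS⟩, hadj⟩


lemma step_lemma (m Δ : ℕ) (hdeg : ∀ v : V, G.degree v ≤ Δ)
    (hΔm : Δ ≤ m) (S : Finset V) (hne : S.Nonempty)
    (hI1 : ((CC G S : ℤ)) ^ 2 ≤ (XX G S : ℤ) * (YY G S : ℤ) + 4 * m * Δ)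
    (hI2 : XX G S + YY G S + 2 * CC G S = 2 * m) :
    ∃ v ∈ S,
      (((CC G (S.erase v) : ℤ)) ^ 2
        ≤ (XX G (S.erase v) : ℤ) * (YY G (S.erase v) : ℤ) + 4 * m * Δ)
      ∧ (XX G (S.erase v) + YY G (S.erase v) + 2 * CC G (S.erase v) = 2 * m) := by
  classical
  set X := (XX G S : ℤ) with hXdef
  set Y := (YY G S : ℤ) with hYdef
  set C := (CC G S : ℤ) with hCdef
  have htX : ∀ v ∈ S, (XX G (S.erase v) : ℤ) = X - 2 * (aa G S v : ℤ) := by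
    intro v hv
    have h : (XX G S : ℤ) = (XX G (S.erase v) : ℤ) + 2 * (aa G S v : ℤ) := by
      exact_mod_cast XX_erase G S hv
    rw [← hXdef] at h
    linarith
  have htC : ∀ v ∈ S, (CC G (S.erase v) : ℤ) = C + (aa G S v : ℤ) - (bb G S v : ℤ) := by
    intro v hv
    have h : (CC G (S.erase v) : ℤ) + (bb G S v : ℤ) = (CC G S : ℤ) + (aa G S v : ℤ) := by
      exact_mod_cast CC_erase G S hv
    rw [← hCdef] at h
    linarith
  have htY : ∀ v ∈ S, (YY G (S.erase v) : ℤ) = Y + 2 * (bb G S v : ℤ) := by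
    intro v hv
    have h : (YY G (S.erase v) : ℤ) = (YY G S : ℤ) + 2 * (bb G S v : ℤ) := by
      exact_mod_cast YY_erase G S hv
    rw [← hYdef] at h
    linarith
  have h2m : X + Y + 2 * C = 2 * (m : ℤ) := by
    simp only [hXdef, hYdef, hCdef]
    exact_mod_cast hI2
  have hI2' : ∀ v ∈ S,
      XX G (S.erase v) + YY G (S.erase v) + 2 * CC G (S.erase v) = 2 * m := by
    intro v hv
    have hcast : ((XX G (S.erase v) + YY G (S.erase v) + 2 * CC G (S.erase v) : ℕ) : ℤ)
        = ((2 * m : ℕ) : ℤ) := by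
      push_cast
      rw [htX v hv, htY v hv, htC v hv]
      linarith
    exact_mod_cast hcast
  have hab : ∀ v : V, (aa G S v : ℤ) + (bb G S v : ℤ) ≤ (Δ : ℤ) := by
    intro v
    have h1 : aa G S v + bb G S v ≤ Δ := by
      rw [aa_add_bb]; exact hdeg v
    exact_mod_cast h1
  have hsa : ∑ v ∈ S, (aa G S v : ℤ) = X := by
    rw [hXdef, XX]; push_cast; rfl
  have hsb : ∑ v ∈ S, (bb G S v : ℤ) = C := by
    rw [hCdef, CC]; push_cast; rfl
  by_cases hP : 2 * X * Y + (Δ : ℤ) * (X + C) ≤ 2 * C ^ 2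
  · -- averaging case : some vertex does not increase the excess
    set f : V → ℤ := fun v =>
      (2 * X * (bb G S v : ℤ) + 2 * C * (bb G S v : ℤ))
        - (2 * Y * (aa G S v : ℤ) + 2 * C * (aa G S v : ℤ)
            + ((aa G S v : ℤ) + (bb G S v : ℤ)) ^ 2) with hfdef
    have hsumf : ∑ v ∈ S, f v
        = 2 * C ^ 2 - 2 * X * Y - ∑ v ∈ S, ((aa G S v : ℤ) + (bb G S v : ℤ)) ^ 2 := by
      simp only [hfdef]
      rw [Finset.sum_sub_distrib, Finset.sum_add_distrib, Finset.sum_add_distrib,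
        Finset.sum_add_distrib, ← Finset.mul_sum, ← Finset.mul_sum, ← Finset.mul_sum,
        ← Finset.mul_sum, hsa, hsb]
      ring
    have hsq : ∑ v ∈ S, ((aa G S v : ℤ) + (bb G S v : ℤ)) ^ 2 ≤ (Δ : ℤ) * (X + C) := by
      have h1 : ∑ v ∈ S, ((aa G S v : ℤ) + (bb G S v : ℤ)) ^ 2
          ≤ ∑ v ∈ S, (Δ : ℤ) * ((aa G S v : ℤ) + (bb G S v : ℤ)) := by
        refine Finset.sum_le_sum fun v hv => ?_
        have h0 : (0 : ℤ) ≤ (aa G S v : ℤ) + (bb G S v : ℤ) := by positivity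
        nlinarith [hab v]
      have h2 : ∑ v ∈ S, (Δ : ℤ) * ((aa G S v : ℤ) + (bb G S v : ℤ)) = (Δ : ℤ) * (X + C) := by
        rw [← Finset.mul_sum, Finset.sum_add_distrib, hsa, hsb]
      linarith
    have hsumf0 : ∑ v ∈ S, (fun _ => (0 : ℤ)) v ≤ ∑ v ∈ S, f v := by
      rw [hsumf]
      simp only [Finset.sum_const_zero]
      linarith
    obtain ⟨v, hv, hfv⟩ := Finset.exists_le_of_sum_le hne hsumf0
    refine ⟨v, hv, ?_, hI2' v hv⟩
    rw [htX v hv, htY v hv, htC v hv]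
    have hid : (C + (aa G S v : ℤ) - (bb G S v : ℤ)) ^ 2
        - (X - 2 * (aa G S v : ℤ)) * (Y + 2 * (bb G S v : ℤ))
        = C ^ 2 - X * Y - f v := by
      simp only [hfdef]; ring
    have hfv' : (0 : ℤ) ≤ f v := hfv
    linarith [hI1, hid, hfv']
  · -- forced case : any vertex works
    push_neg at hP
    obtain ⟨v, hv⟩ := hne
    refine ⟨v, hv, ?_, hI2' v hv⟩
    rw [htX v hv, htY v hv, htC v hv]
    set a := (aa G S v : ℤ) with hadef
    set b := (bb G S v : ℤ) with hbdef
    have ha0 : 0 ≤ a := by rw [hadef]; exact Int.natCast_nonneg _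
    have hb0 : 0 ≤ b := by rw [hbdef]; exact Int.natCast_nonneg _
    have habΔ : a + b ≤ (Δ : ℤ) := hab v
    have hΔ0 : (0 : ℤ) ≤ (Δ : ℤ) := Int.natCast_nonneg _
    have hX'0 : 0 ≤ X - 2 * a := by
      rw [hadef, ← htX v hv]; exact Int.natCast_nonneg _
    have hY0 : 0 ≤ Y := by rw [hYdef]; exact Int.natCast_nonneg _
    have hC0 : 0 ≤ C := by rw [hCdef]; exact Int.natCast_nonneg _
    have hX0 : 0 ≤ X := by rw [hXdef]; exact Int.natCast_nonneg _
    have hΔm' : (Δ : ℤ) ≤ (m : ℤ) := by exact_mod_cast hΔm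
    have hm0 : (0 : ℤ) ≤ (m : ℤ) := le_trans hΔ0 hΔm'
    have hsq1 : (C + a - b) ^ 2 ≤ (C + (Δ : ℤ)) ^ 2 := by
      have p1 : 0 ≤ (2 * C + (Δ : ℤ) + a - b) * ((Δ : ℤ) + b - a) :=
        mul_nonneg (by linarith) (by linarith)
      have e : (C + (Δ : ℤ)) ^ 2 - (C + a - b) ^ 2
          = (2 * C + (Δ : ℤ) + a - b) * ((Δ : ℤ) + b - a) := by ring
      linarith
    by_cases h2a : (C + (Δ : ℤ)) ^ 2 ≤ 4 * m * Δ
    · have hprod : 0 ≤ (X - 2 * a) * (Y + 2 * b) :=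
        mul_nonneg hX'0 (by linarith)
      linarith [hsq1]
    · push_neg at h2a
      have hΔC : (Δ : ℤ) ≤ C := by
        by_contra hc
        push_neg at hc
        have h1 : (C + (Δ : ℤ)) ^ 2 ≤ (2 * (Δ : ℤ)) ^ 2 := by
          have hle : C + (Δ : ℤ) ≤ 2 * Δ := by linarith
          have hnn : 0 ≤ C + (Δ : ℤ) := by linarith
          exact pow_le_pow_left₀ hnn hle 2
        have h2 : 4 * (Δ : ℤ) * Δ ≤ 4 * m * Δ :=
          mul_le_mul_of_nonneg_right (by linarith) hΔ0
        have h3 : (2 * (Δ : ℤ)) ^ 2 = 4 * Δ * Δ := by ring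
        linarith
      have hstep2 : (X - 2 * (Δ : ℤ)) * Y ≤ (X - 2 * a) * (Y + 2 * b) := by
        have p1 : 0 ≤ (X - 2 * a) * (2 * b) :=
          mul_nonneg hX'0 (by linarith)
        have p2 : 0 ≤ (2 * (Δ : ℤ) - 2 * a) * Y :=
          mul_nonneg (by linarith) hY0
        have e : (X - 2 * a) * (Y + 2 * b)
            = (X - 2 * (Δ : ℤ)) * Y + (X - 2 * a) * (2 * b) + (2 * (Δ : ℤ) - 2 * a) * Y := by
          ring
        linarith
      have hstep3 : (C + (Δ : ℤ)) ^ 2 ≤ (X - 2 * (Δ : ℤ)) * Y + 4 * m * Δ := by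
        have hm8 : 8 * (m : ℤ) * Δ = 4 * (Δ : ℤ) * X + 4 * Δ * Y + 8 * Δ * C := by
          linear_combination (-4 : ℤ) * (Δ : ℤ) * h2m
        have hΔΔC : (Δ : ℤ) * Δ ≤ Δ * C := mul_le_mul_of_nonneg_left hΔC hΔ0
        have hΔX0 : 0 ≤ (Δ : ℤ) * X := mul_nonneg hΔ0 hX0
        have hΔC0 : 0 ≤ (Δ : ℤ) * C := mul_nonneg hΔ0 hC0
        linarith [hP, hm8, hΔΔC, hΔX0, hΔC0]
      linarith [hsq1, hstep2, hstep3]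

lemma exists_chain (P : Finset V → Prop) (hP0 : P Finset.univ)
    (hstep : ∀ T : Finset V, T.Nonempty → P T → ∃ v ∈ T, P (T.erase v)) :
    ∃ S : ℕ → Finset V, S 0 = Finset.univ ∧ S (Fintype.card V) = ∅ ∧
      (∀ i < Fintype.card V, ∃ v ∈ S i, S (i + 1) = (S i).erase v) ∧
      (∀ i ≤ Fintype.card V, P (S i)) := by
  classical
  have hg : ∀ T : Finset V, ∃ T' : Finset V,
      (T.Nonempty → P T → (∃ v ∈ T, T' = T.erase v) ∧ P T') := by
    intro T
    by_cases h : T.Nonempty ∧ P T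
    · obtain ⟨v, hv, hPv⟩ := hstep T h.1 h.2
      exact ⟨T.erase v, fun _ _ => ⟨⟨v, hv, rfl⟩, hPv⟩⟩
    · exact ⟨∅, fun h1 h2 => absurd ⟨h1, h2⟩ h⟩
  choose g hgspec using hg
  have hSsucc : ∀ i : ℕ, g^[i + 1] (Finset.univ : Finset V) = g (g^[i] Finset.univ) :=
    fun i => Function.iterate_succ_apply' g i Finset.univ
  have hmain : ∀ i : ℕ, i ≤ Fintype.card V →
      P (g^[i] Finset.univ) ∧ (g^[i] Finset.univ).card = Fintype.card V - i := by
    intro i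
    induction i with
    | zero =>
      intro _
      exact ⟨hP0, by simp [Finset.card_univ]⟩
    | succ k ih =>
      intro hk1
      obtain ⟨hPk, hck⟩ := ih (Nat.le_of_succ_le hk1)
      have hne : (g^[k] (Finset.univ : Finset V)).Nonempty := by
        rw [← Finset.card_pos, hck]
        omega
      obtain ⟨⟨v, hvmem, heq⟩, hPnext⟩ := hgspec (g^[k] Finset.univ) hne hPk
      constructor
      · rw [hSsucc k]
        exact hPnext
      · rw [hSsucc k, heq, Finset.card_erase_of_mem hvmem, hck]
        omega
  refine ⟨fun i => g^[i] Finset.univ, rfl, ?_, ?_, fun i hi => (hmain i hi).1⟩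
  · have h := (hmain (Fintype.card V) le_rfl).2
    rw [Nat.sub_self] at h
    exact Finset.card_eq_zero.mp h
  · intro i hi
    have hne : (g^[i] (Finset.univ : Finset V)).Nonempty := by
      rw [← Finset.card_pos, (hmain i (le_of_lt hi)).2]
      omega
    obtain ⟨⟨v, hvmem, heq⟩, _⟩ := hgspec (g^[i] Finset.univ) hne (hmain i (le_of_lt hi)).1
    refine ⟨v, hvmem, ?_⟩
    show g^[i + 1] Finset.univ = (g^[i] Finset.univ).erase v
    rw [hSsucc i, heq]

end CutProofAux

/-- For any finite simple graph `G` with `m` edges, `n` vertices and maximum degree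
at most `Δ`, there is a downward sequence `V = S₀ ⊋ S₁ ⊋ ⋯ ⊋ Sₙ = ∅` (each step removing
exactly one vertex) such that every set in the sequence cuts at most `m/2 + √(m·Δ) + Δ` edges. -/
theorem downward_sequence_low_degree {V : Type*} [Fintype V] (G : SimpleGraph V)
    (n m Δ : ℕ) (hn : n = Fintype.card V) (hm : m = G.edgeFinset.card)
    (hΔ : ∀ v : V, G.degree v ≤ Δ) :
    ∃ S : ℕ → Finset V,
      S 0 = Finset.univ ∧ S n = ∅ ∧
      (∀ i < n, ∃ v ∈ S i, S (i + 1) = (S i).erase v) ∧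
      (∀ i ≤ n, (cutCard G (S i) : ℝ) ≤ (m : ℝ) / 2 + Real.sqrt (m * Δ) + Δ) := by
  classical
  subst hn
  by_cases hcase : m ≤ Δ
  · -- trivial case : every cut is at most `m ≤ m/2 + Δ`
    obtain ⟨S, hS0, hSn, hstep, -⟩ :=
      CutProofAux.exists_chain (fun _ : Finset V => True) trivial
        (fun T hne _ => ⟨hne.choose, hne.choose_spec, trivial⟩)
    refine ⟨S, hS0, hSn, hstep, ?_⟩
    intro i _
    have h1 : cutCard G (S i) ≤ m := by
      rw [hm, cutCard]
      exact Finset.card_filter_le _ _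
    have h2 : (cutCard G (S i) : ℝ) ≤ (m : ℝ) := by exact_mod_cast h1
    have h3 : (m : ℝ) ≤ (Δ : ℝ) := by exact_mod_cast hcase
    have h4 : 0 ≤ Real.sqrt (m * Δ) := Real.sqrt_nonneg _
    linarith
  · push_neg at hcase
    have hΔm : Δ ≤ m := le_of_lt hcase
    have hm0 : 0 < m := lt_of_le_of_lt (Nat.zero_le _) hcase
    have hP0 : ((CutProofAux.CC G (Finset.univ : Finset V) : ℤ)) ^ 2
          ≤ (CutProofAux.XX G (Finset.univ : Finset V) : ℤ)
            * (CutProofAux.YY G (Finset.univ : Finset V) : ℤ) + 4 * m * Δ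
        ∧ CutProofAux.XX G (Finset.univ : Finset V)
            + CutProofAux.YY G (Finset.univ : Finset V)
            + 2 * CutProofAux.CC G (Finset.univ : Finset V) = 2 * m := by
      constructor
      · have hpos : (0 : ℤ) ≤ (CutProofAux.XX G (Finset.univ : Finset V) : ℤ)
            * (CutProofAux.YY G (Finset.univ : Finset V) : ℤ) + 4 * m * Δ := by
          positivity
        simpa [CutProofAux.CC_univ] using hpos
      · rw [CutProofAux.XX_univ, CutProofAux.YY_univ, CutProofAux.CC_univ, hm]
        omega
    obtain ⟨S, hS0, hSn, hstep, hPall⟩ :=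
      CutProofAux.exists_chain
        (fun T : Finset V =>
          ((CutProofAux.CC G T : ℤ)) ^ 2
              ≤ (CutProofAux.XX G T : ℤ) * (CutProofAux.YY G T : ℤ) + 4 * m * Δ
            ∧ CutProofAux.XX G T + CutProofAux.YY G T + 2 * CutProofAux.CC G T = 2 * m)
        hP0
        (fun T hne hPT => CutProofAux.step_lemma G m Δ hΔ hΔm T hne hPT.1 hPT.2)
    refine ⟨S, hS0, hSn, hstep, ?_⟩
    intro i hi
    obtain ⟨h1, h2⟩ := hPall i hi
    set Xi := (CutProofAux.XX G (S i) : ℤ) with hXi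
    set Yi := (CutProofAux.YY G (S i) : ℤ) with hYi
    set Ci := (CutProofAux.CC G (S i) : ℤ) with hCi
    have h2' : Xi + Yi = 2 * (m : ℤ) - 2 * Ci := by
      have hc : ((CutProofAux.XX G (S i) + CutProofAux.YY G (S i)
          + 2 * CutProofAux.CC G (S i) : ℕ) : ℤ) = ((2 * m : ℕ) : ℤ) := by
        exact_mod_cast congrArg (Nat.cast : ℕ → ℤ) h2
      push_cast at hc
      rw [← hXi, ← hYi, ← hCi] at hc
      linarith
    have hsq : 4 * (Xi * Yi) ≤ (Xi + Yi) ^ 2 := by nlinarith [sq_nonneg (Xi - Yi)]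
    have hsq2 : 4 * (Xi * Yi) ≤ (2 * (m : ℤ) - 2 * Ci) ^ 2 := by
      rw [← h2']; exact hsq
    have key : (m : ℤ) * (8 * Ci) ≤ (m : ℤ) * (4 * m + 16 * Δ) := by nlinarith [h1, hsq2]
    have hmZ : (0 : ℤ) < (m : ℤ) := by exact_mod_cast hm0
    have hCle : 8 * Ci ≤ 4 * (m : ℤ) + 16 * (Δ : ℤ) := le_of_mul_le_mul_left key hmZ
    have hccR : (cutCard G (S i) : ℝ) ≤ (m : ℝ) / 2 + 2 * Δ := by
      have hcc : cutCard G (S i) = CutProofAux.CC G (S i) :=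
        (CutProofAux.CC_eq_cutCard G _).symm
      have h8 : (8 : ℝ) * (CutProofAux.CC G (S i) : ℝ) ≤ 4 * m + 16 * Δ := by
        have h9 := hCle
        rw [hCi] at h9
        exact_mod_cast h9
      rw [hcc]
      linarith
    have hΔsqrt : (Δ : ℝ) ≤ Real.sqrt (m * Δ) := by
      have hd1 : ((Δ : ℝ)) ^ 2 ≤ (m : ℝ) * (Δ : ℝ) := by
        have hmd : (Δ : ℝ) ≤ (m : ℝ) := by exact_mod_cast hΔm
        have hd0 : (0 : ℝ) ≤ (Δ : ℝ) := by positivity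
        nlinarith
      calc (Δ : ℝ) = Real.sqrt (((Δ : ℝ)) ^ 2) := (Real.sqrt_sq (by positivity)).symm
        _ ≤ Real.sqrt ((m : ℝ) * (Δ : ℝ)) := Real.sqrt_le_sqrt hd1
    linarith
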